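/- arXiv:1709.01625 — 3 statements merged into one kernel-verified Lean document; each statement's English description precedes it below -/
import Mathlib

section
/- Let 𝒳 = ∏_{j=1}^n 𝒳_j be a product of finite sets, let x⁽¹⁾ ∈ 𝒳 with prefix-partition sets P_1,…,P_n, and suppose x⁽²⁾ ∈ P_i for some i. Define Q_0 = { x ∈ 𝒳 : x_j = x⁽²⁾_j for all j < i, and x_i ∉ {x⁽¹⁾_i, x⁽²⁾_i} } and, for l = i+1,…,n, Q_l = { x ∈ 𝒳 : x_j = x⁽²⁾_j for all j < l, and x_l ≠ x⁽²⁾_l }. Then the collection { P_j : j ∈ [n], j ≠ i } ∪ { Q_0, Q_{i+1}, …, Q_n } consists of pairwise disjoint sets whose union equals 𝒳 ∖ {x⁽¹⁾, x⁽²⁾}. -/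
lemma prefix_disjoint_aux {n : ℕ} {𝒳 : Fin n → Type*} (y : ∀ j, 𝒳 j)
    {k1 k2 : Fin n} (h : k1 < k2) :
    Disjoint {x : ∀ j, 𝒳 j | (∀ j, j < k1 → x j = y j) ∧ x k1 ≠ y k1}
      {x : ∀ j, 𝒳 j | (∀ j, j < k2 → x j = y j) ∧ x k2 ≠ y k2} := by
  rw [Set.disjoint_left]
  rintro x ⟨-, h2⟩ ⟨h3, -⟩
  exact h2 (h3 k1 h)

lemma prefix_disjoint_aux' {n : ℕ} {𝒳 : Fin n → Type*} (y : ∀ j, 𝒳 j)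
    {k1 k2 : Fin n} (h : k1 ≠ k2) :
    Disjoint {x : ∀ j, 𝒳 j | (∀ j, j < k1 → x j = y j) ∧ x k1 ≠ y k1}
      {x : ∀ j, 𝒳 j | (∀ j, j < k2 → x j = y j) ∧ x k2 ≠ y k2} := by
  rcases lt_or_gt_of_ne h with h | h
  · exact prefix_disjoint_aux y h
  · exact (prefix_disjoint_aux y h).symm

/-- Refinement of the prefix partition. If `x2 ∈ P i`, then the
collection `{P j : j ≠ i} ∪ {Q0} ∪ {Q l : l > i}`, where
`Q0 = {x | x j = x2 j ∀ j < i, x i ∉ {x1 i, x2 i}}` and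
`Q l = {x | x j = x2 j ∀ j < l, x l ≠ x2 l}`, consists of pairwise disjoint
sets whose union is `𝒳 ∖ {x1, x2}`. -/
theorem prefix_partition_refine {n : ℕ} (𝒳 : Fin n → Type*) [∀ j, Fintype (𝒳 j)]
    (x1 x2 : ∀ j, 𝒳 j) (i : Fin n)
    (P : Fin n → Set (∀ j, 𝒳 j))
    (hP : P = fun k => {x | (∀ j, j < k → x j = x1 j) ∧ x k ≠ x1 k})
    (hx2 : x2 ∈ P i)
    (Q0 : Set (∀ j, 𝒳 j))
    (hQ0 : Q0 = {x | (∀ j, j < i → x j = x2 j) ∧ x i ≠ x1 i ∧ x i ≠ x2 i})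
    (Q : Fin n → Set (∀ j, 𝒳 j))
    (hQ : Q = fun l => {x | (∀ j, j < l → x j = x2 j) ∧ x l ≠ x2 l})
    (F : ({j : Fin n // j ≠ i} ⊕ (Unit ⊕ {l : Fin n // i < l})) → Set (∀ j, 𝒳 j))
    (hF : F = fun idx => match idx with
      | Sum.inl j => P j.1
      | Sum.inr (Sum.inl _) => Q0
      | Sum.inr (Sum.inr l) => Q l.1) :
    (Pairwise (Function.onFun Disjoint F)) ∧
    (⋃ idx, F idx) = ({x1, x2} : Set (∀ j, 𝒳 j))ᶜ := by
  classical
  subst hP hQ0 hQ hF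
  obtain ⟨h21, h2i⟩ := hx2
  -- h21 : ∀ j, j < i → x2 j = x1 j ; h2i : x2 i ≠ x1 i
  -- key pairwise disjointness pieces
  have hPQ0 : ∀ (j : Fin n), j ≠ i →
      Disjoint {x : ∀ j, 𝒳 j | (∀ k, k < j → x k = x1 k) ∧ x j ≠ x1 j}
        {x : ∀ j, 𝒳 j | (∀ k, k < i → x k = x2 k) ∧ x i ≠ x1 i ∧ x i ≠ x2 i} := by
    intro j hj
    rw [Set.disjoint_left]
    rintro x ⟨hp1, hp2⟩ ⟨hq1, hq2, hq3⟩
    rcases lt_or_gt_of_ne hj with h | h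
    · exact hp2 ((hq1 j h).trans (h21 j h))
    · exact hq2 (hp1 i h)
  have hPQ : ∀ (j : Fin n), j ≠ i → ∀ (l : Fin n), i < l →
      Disjoint {x : ∀ j, 𝒳 j | (∀ k, k < j → x k = x1 k) ∧ x j ≠ x1 j}
        {x : ∀ j, 𝒳 j | (∀ k, k < l → x k = x2 k) ∧ x l ≠ x2 l} := by
    intro j hj l hl
    rw [Set.disjoint_left]
    rintro x ⟨hp1, hp2⟩ ⟨hq1, hq2⟩
    rcases lt_or_gt_of_ne hj with h | h
    · exact hp2 ((hq1 j (h.trans hl)).trans (h21 j h))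
    · exact h2i ((hq1 i hl).symm.trans (hp1 i h))
  have hQ0Q : ∀ (l : Fin n), i < l →
      Disjoint {x : ∀ j, 𝒳 j | (∀ k, k < i → x k = x2 k) ∧ x i ≠ x1 i ∧ x i ≠ x2 i}
        {x : ∀ j, 𝒳 j | (∀ k, k < l → x k = x2 k) ∧ x l ≠ x2 l} := by
    intro l hl
    rw [Set.disjoint_left]
    rintro x ⟨hq1, hq2, hq3⟩ ⟨hr1, hr2⟩
    exact hq3 (hr1 i hl)
  constructor
  · rintro (⟨j1, hj1⟩ | ⟨⟨⟩⟩ | ⟨l1, hl1⟩) (⟨j2, hj2⟩ | ⟨⟨⟩⟩ | ⟨l2, hl2⟩) hne <;>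
      simp only [Function.onFun]
    · exact prefix_disjoint_aux' x1 (fun h => hne (by simp [h]))
    · exact hPQ0 j1 hj1
    · exact hPQ j1 hj1 l2 hl2
    · exact (hPQ0 j2 hj2).symm
    · exact absurd rfl hne
    · exact hQ0Q l2 hl2
    · exact (hPQ j2 hj2 l1 hl1).symm
    · exact (hQ0Q l1 hl1).symm
    · exact prefix_disjoint_aux' x2 (fun h => hne (by simp [h]))
  · ext x
    simp only [Set.mem_iUnion, Set.mem_compl_iff, Set.mem_insert_iff,
      Set.mem_singleton_iff, not_or]
    constructor
    · rintro ⟨(⟨j, hj⟩ | ⟨⟨⟩⟩ | ⟨l, hl⟩), hx⟩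
      · obtain ⟨h1, h2⟩ := hx
        refine ⟨fun h => h2 (congrFun h j), fun h => ?_⟩
        rcases lt_or_gt_of_ne hj with hji | hji
        · exact h2 ((congrFun h j).trans (h21 j hji))
        · exact h2i ((congrFun h i).symm.trans (h1 i hji))
      · obtain ⟨h1, h2, h3⟩ := hx
        exact ⟨fun h => h2 (congrFun h i), fun h => h3 (congrFun h i)⟩
      · obtain ⟨h1, h2⟩ := hx
        exact ⟨fun h => h2i ((h1 i hl).symm.trans (congrFun h i)),
          fun h => h2 (congrFun h l)⟩
    · rintro ⟨hne1, hne2⟩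
      have hex1 : (Finset.univ.filter fun j => x j ≠ x1 j).Nonempty := by
        by_contra h
        rw [Finset.not_nonempty_iff_eq_empty, Finset.filter_eq_empty_iff] at h
        exact hne1 (funext fun j => not_not.mp (h (Finset.mem_univ j)))
      set j := (Finset.univ.filter fun j => x j ≠ x1 j).min' hex1 with hjdef
      have hj : x j ≠ x1 j := (Finset.mem_filter.mp (Finset.min'_mem _ hex1)).2
      have hjmin : ∀ k, k < j → x k = x1 k := by
        intro k hk
        by_contra h
        exact absurd (Finset.min'_le _ k (by simp [h])) (not_le.mpr hk)
      by_cases hji : j = i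
      · -- minimal disagreement with x1 is at i; look at disagreement with x2
        have hex2 : (Finset.univ.filter fun l => x l ≠ x2 l).Nonempty := by
          by_contra h
          rw [Finset.not_nonempty_iff_eq_empty, Finset.filter_eq_empty_iff] at h
          exact hne2 (funext fun l => not_not.mp (h (Finset.mem_univ l)))
        set l := (Finset.univ.filter fun l => x l ≠ x2 l).min' hex2 with hldef
        have hl : x l ≠ x2 l := (Finset.mem_filter.mp (Finset.min'_mem _ hex2)).2
        have hlmin : ∀ k, k < l → x k = x2 k := by
          intro k hk
          by_contra h
          exact absurd (Finset.min'_le _ k (by simp [h])) (not_le.mpr hk)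
        have hil : ¬ l < i := fun h =>
          hl (((hjmin l (hji ▸ h)).trans (h21 l h).symm))
        rcases eq_or_lt_of_le (not_lt.mp hil) with hli | hli
        · -- l = i : x ∈ Q0
          refine ⟨Sum.inr (Sum.inl ()), fun k hk => hlmin k (hli ▸ hk), hji ▸ hj, by rw [hli]; exact hl⟩
        · -- i < l : x ∈ Q l
          exact ⟨Sum.inr (Sum.inr ⟨l, hli⟩), hlmin, hl⟩
      · exact ⟨Sum.inl ⟨j, hji⟩, hjmin, hj⟩
end

section
/- Let S ⊂ ℝ^n be a nonempty finite set, A an m×n real matrix, b ∈ ℝ^m, and c ∈ ℝ^n. Assume there exists x in the convex hull of S with A x ≥ b (componentwise). Then the Lagrangian dual value equals the value of the linear program over the convex hull: sup_{λ ∈ ℝ^m, λ ≥ 0} min_{x ∈ S} ( ⟨c, x⟩ − ⟨λ, A x − b⟩ ) = min { ⟨c, x⟩ : x ∈ convexHull(S), A x ≥ b }. -/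
lemma inf_affine_le {n : ℕ} (S : Finset (Fin n → ℝ)) (hS : S.Nonempty)
    (d : Fin n → ℝ) (e : ℝ) {x : Fin n → ℝ} (hx : x ∈ convexHull ℝ (S : Set (Fin n → ℝ))) :
    (⨅ s : S, ((∑ i, d i * (s : Fin n → ℝ) i) + e)) ≤ (∑ i, d i * x i) + e := by
  classical
  have : Nonempty S := hS.to_subtype
  rw [Finset.convexHull_eq] at hx
  obtain ⟨w, hw0, hw1, hx⟩ := hx
  rw [Finset.centerMass_eq_of_sum_1 _ _ hw1] at hx
  have hbdd : BddBelow (Set.range fun s : S => (∑ i, d i * (s : Fin n → ℝ) i) + e) :=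
    (Set.finite_range _).bddBelow
  have hxi : ∀ i, x i = ∑ y ∈ S, w y * y i := by
    intro i
    rw [← hx]
    simp [Finset.sum_apply]
  have h1 : (∑ i, d i * x i) + e = ∑ y ∈ S, w y * ((∑ i, d i * y i) + e) := by
    have hswap : ∑ i, d i * x i = ∑ y ∈ S, w y * (∑ i, d i * y i) := by
      simp only [hxi, Finset.mul_sum]
      rw [Finset.sum_comm]
      exact Finset.sum_congr rfl fun y _ => Finset.sum_congr rfl fun i _ => by ring
    have h2 : ∑ y ∈ S, w y * e = e := by rw [← Finset.sum_mul, hw1, one_mul]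
    calc (∑ i, d i * x i) + e = (∑ y ∈ S, w y * (∑ i, d i * y i)) + ∑ y ∈ S, w y * e := by
          rw [hswap, h2]
      _ = ∑ y ∈ S, w y * ((∑ i, d i * y i) + e) := by
          rw [← Finset.sum_add_distrib]
          exact Finset.sum_congr rfl fun y _ => by ring
  rw [h1]
  have hlow : ∀ y ∈ S, (⨅ s : S, ((∑ i, d i * (s : Fin n → ℝ) i) + e)) * w y
      ≤ w y * ((∑ i, d i * y i) + e) := by
    intro y hy
    rw [mul_comm]
    exact mul_le_mul_of_nonneg_left (ciInf_le hbdd (⟨y, hy⟩ : S)) (hw0 y hy)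
  calc (⨅ s : S, ((∑ i, d i * (s : Fin n → ℝ) i) + e))
      = (⨅ s : S, ((∑ i, d i * (s : Fin n → ℝ) i) + e)) * ∑ y ∈ S, w y := by rw [hw1, mul_one]
    _ = ∑ y ∈ S, (⨅ s : S, ((∑ i, d i * (s : Fin n → ℝ) i) + e)) * w y := by rw [Finset.mul_sum]
    _ ≤ ∑ y ∈ S, w y * ((∑ i, d i * y i) + e) := Finset.sum_le_sum hlow

lemma lag_rewrite {m n : ℕ} (A : Matrix (Fin m) (Fin n) ℝ) (b : Fin m → ℝ)
    (c : Fin n → ℝ) (lam : Fin m → ℝ) (y : Fin n → ℝ) :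
    (∑ i, c i * y i) - ∑ j, lam j * ((∑ i, A j i * y i) - b j)
      = (∑ i, (c i - ∑ j, lam j * A j i) * y i) + ∑ j, lam j * b j := by
  have hswap : ∑ i, (∑ j, lam j * A j i) * y i = ∑ j, lam j * (∑ i, A j i * y i) := by
    simp only [Finset.sum_mul, Finset.mul_sum]
    rw [Finset.sum_comm]
    exact Finset.sum_congr rfl fun j _ => Finset.sum_congr rfl fun i _ => by ring
  have e1 : ∑ j, lam j * ((∑ i, A j i * y i) - b j)
      = (∑ j, lam j * (∑ i, A j i * y i)) - ∑ j, lam j * b j := by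
    simp [mul_sub, Finset.sum_sub_distrib]
  have e2 : ∑ i, (c i - ∑ j, lam j * A j i) * y i
      = (∑ i, c i * y i) - ∑ i, (∑ j, lam j * A j i) * y i := by
    simp [sub_mul, Finset.sum_sub_distrib]
  rw [e1, e2, hswap]
  ring

lemma clm_decomp {m : ℕ} (f : ((Fin m → ℝ) × ℝ) →L[ℝ] ℝ) (z : Fin m → ℝ) (r : ℝ) :
    f (z, r) = (∑ j, z j * f (((fun j' => if j = j' then (1:ℝ) else 0) : Fin m → ℝ), 0))
      + r * f ((0 : Fin m → ℝ), 1) := by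
  have hzr : (z, r) = (∑ j, z j • ((((fun j' => if j = j' then (1:ℝ) else 0)) : Fin m → ℝ), (0:ℝ)))
      + r • ((0 : Fin m → ℝ), (1:ℝ)) := by
    refine Prod.ext ?_ ?_
    · simp only [Prod.fst_add, Prod.fst_sum, Prod.smul_fst, smul_zero, add_zero, smul_eq_mul]
      exact pi_eq_sum_univ z
    · simp [Prod.snd_add, Prod.snd_sum]
  rw [hzr, map_add, map_sum]
  simp only [map_smul, smul_eq_mul]

/-- Geoffrion: For a nonempty finite set `S ⊂ ℝ^n`, matrix `A`,
vectors `b, c`, if some point of the convex hull of `S` satisfies `A x ≥ b`,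
then the Lagrangian dual value equals the value of the LP over the convex hull:
`sup_{λ ≥ 0} min_{x∈S} (⟨c,x⟩ − ⟨λ, Ax − b⟩) = min {⟨c,x⟩ : x ∈ conv(S), Ax ≥ b}`. -/
theorem geoffrion_lagrangian_dual {m n : ℕ} (S : Finset (Fin n → ℝ)) (hS : S.Nonempty)
    (A : Matrix (Fin m) (Fin n) ℝ) (b : Fin m → ℝ) (c : Fin n → ℝ)
    (hfeas : ∃ x ∈ convexHull ℝ (S : Set (Fin n → ℝ)), ∀ j, b j ≤ ∑ i, A j i * x i) :
    (⨆ lam : {lam : Fin m → ℝ // ∀ j, 0 ≤ lam j},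
        ⨅ x : S,
          ((∑ i, c i * (x : Fin n → ℝ) i)
            - ∑ j, lam.1 j * ((∑ i, A j i * (x : Fin n → ℝ) i) - b j))) =
    ⨅ x : {x : Fin n → ℝ //
        x ∈ convexHull ℝ (S : Set (Fin n → ℝ)) ∧ ∀ j, b j ≤ ∑ i, A j i * x i},
      ∑ i, c i * x.1 i := by
  classical
  have hSne : Nonempty S := hS.to_subtype
  obtain ⟨x₀, hx₀h, hx₀f⟩ := hfeas
  have hFeasNe : Nonempty {x : Fin n → ℝ //
      x ∈ convexHull ℝ (S : Set (Fin n → ℝ)) ∧ ∀ j, b j ≤ ∑ i, A j i * x i} :=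
    ⟨⟨x₀, hx₀h, hx₀f⟩⟩
  -- lower bound for the LP objective on the hull
  have hlb : ∀ x ∈ convexHull ℝ (S : Set (Fin n → ℝ)),
      (⨅ s : S, ((∑ i, c i * (s : Fin n → ℝ) i) + 0)) ≤ ∑ i, c i * x i := by
    intro x hx
    simpa using inf_affine_le S hS c 0 hx
  have hbddR : BddBelow (Set.range fun x : {x : Fin n → ℝ //
      x ∈ convexHull ℝ (S : Set (Fin n → ℝ)) ∧ ∀ j, b j ≤ ∑ i, A j i * x i} =>
      ∑ i, c i * x.1 i) := by
    refine ⟨(⨅ s : S, ((∑ i, c i * (s : Fin n → ℝ) i) + 0)), ?_⟩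
    rintro _ ⟨x, rfl⟩
    exact hlb x.1 x.2.1
  set v : ℝ := ⨅ x : {x : Fin n → ℝ //
      x ∈ convexHull ℝ (S : Set (Fin n → ℝ)) ∧ ∀ j, b j ≤ ∑ i, A j i * x i},
      ∑ i, c i * x.1 i with hv
  have hvle : ∀ x : Fin n → ℝ, x ∈ convexHull ℝ (S : Set (Fin n → ℝ)) →
      (∀ j, b j ≤ ∑ i, A j i * x i) → v ≤ ∑ i, c i * x i := by
    intro x h1 h2
    exact ciInf_le hbddR ⟨x, h1, h2⟩
  -- weak duality
  have wk : ∀ lam : {lam : Fin m → ℝ // ∀ j, 0 ≤ lam j},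
      (⨅ x : S, ((∑ i, c i * (x : Fin n → ℝ) i)
        - ∑ j, lam.1 j * ((∑ i, A j i * (x : Fin n → ℝ) i) - b j))) ≤ v := by
    rintro ⟨lam, hlam⟩
    refine le_ciInf ?_
    rintro ⟨x, hxh, hxf⟩
    have hre : (⨅ s : S, ((∑ i, c i * (s : Fin n → ℝ) i)
        - ∑ j, lam j * ((∑ i, A j i * (s : Fin n → ℝ) i) - b j)))
        = ⨅ s : S, ((∑ i, (c i - ∑ j, lam j * A j i) * (s : Fin n → ℝ) i)
            + ∑ j, lam j * b j) :=
      iInf_congr fun s => lag_rewrite A b c lam s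
    rw [hre]
    refine le_trans (inf_affine_le S hS _ _ hxh) ?_
    rw [← lag_rewrite A b c lam x]
    have hnn : 0 ≤ ∑ j, lam j * ((∑ i, A j i * x i) - b j) :=
      Finset.sum_nonneg fun j _ => mul_nonneg (hlam j) (by linarith [hxf j])
    linarith
  have hbddA : BddAbove (Set.range fun lam : {lam : Fin m → ℝ // ∀ j, 0 ≤ lam j} =>
      ⨅ x : S, ((∑ i, c i * (x : Fin n → ℝ) i)
        - ∑ j, lam.1 j * ((∑ i, A j i * (x : Fin n → ℝ) i) - b j))) := by
    refine ⟨v, ?_⟩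
    rintro _ ⟨lam, rfl⟩
    exact wk lam
  have hLamNe : Nonempty {lam : Fin m → ℝ // ∀ j, 0 ≤ lam j} := ⟨⟨0, fun j => le_rfl⟩⟩
  refine le_antisymm (ciSup_le wk) ?_
  refine le_of_forall_sub_le fun ε hε => ?_
  -- separation argument
  set F : (Fin n → ℝ) → (Fin m → ℝ) × ℝ :=
    fun x => (fun j => (∑ i, A j i * x i) - b j, ∑ i, c i * x i) with hF
  set M : Set ((Fin m → ℝ) × ℝ) := F '' (convexHull ℝ (S : Set (Fin n → ℝ))) with hM
  set P : Set ((Fin m → ℝ) × ℝ) := {p | (∀ j, 0 ≤ p.1 j) ∧ p.2 ≤ v - ε} with hP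
  have hFcont : Continuous F := by
    apply Continuous.prodMk
    · exact continuous_pi fun j =>
        (continuous_finset_sum _ fun i _ => continuous_const.mul (continuous_apply i)).sub
          continuous_const
    · exact continuous_finset_sum _ fun i _ => continuous_const.mul (continuous_apply i)
  have hMcv : Convex ℝ M := by
    rintro p ⟨x, hx, rfl⟩ q ⟨y, hy, rfl⟩ a b' ha hb hab
    refine ⟨a • x + b' • y, convex_convexHull ℝ _ hx hy ha hb hab, ?_⟩
    have hsum : ∀ (d : Fin n → ℝ), ∑ i, d i * (a * x i + b' * y i)
        = a * (∑ i, d i * x i) + b' * (∑ i, d i * y i) := by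
      intro d
      rw [Finset.mul_sum, Finset.mul_sum, ← Finset.sum_add_distrib]
      exact Finset.sum_congr rfl fun i _ => by ring
    refine Prod.ext ?_ ?_
    · funext j
      simp only [hF, Prod.fst_add, Prod.smul_fst, Pi.add_apply, Pi.smul_apply, smul_eq_mul]
      rw [hsum (A j)]
      linear_combination (b j) * hab
    · simp only [hF, Prod.snd_add, Prod.smul_snd, smul_eq_mul, Pi.add_apply, Pi.smul_apply]
      exact hsum c
  have hMcp : IsCompact M := ((S.finite_toSet).isCompact_convexHull (𝕜 := ℝ)).image hFcont
  have hPcv : Convex ℝ P := by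
    rintro p ⟨hp1, hp2⟩ q ⟨hq1, hq2⟩ a b' ha hb hab
    constructor
    · intro j
      have : (a • p + b' • q).1 j = a * p.1 j + b' * q.1 j := by
        simp [Prod.smul_fst]
      rw [this]
      exact add_nonneg (mul_nonneg ha (hp1 j)) (mul_nonneg hb (hq1 j))
    · have : (a • p + b' • q).2 = a * p.2 + b' * q.2 := by
        simp [Prod.smul_snd]
      rw [this]
      have h1 : a * p.2 ≤ a * (v - ε) := mul_le_mul_of_nonneg_left hp2 ha
      have h2 : b' * q.2 ≤ b' * (v - ε) := mul_le_mul_of_nonneg_left hq2 hb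
      have h3 : a * (v - ε) + b' * (v - ε) = v - ε := by rw [← add_mul, hab, one_mul]
      linarith
  have hPcl : IsClosed P := by
    have : P = (⋂ j, {p : (Fin m → ℝ) × ℝ | 0 ≤ p.1 j}) ∩ {p | p.2 ≤ v - ε} := by
      ext p
      simp [hP, Set.mem_iInter]
    rw [this]
    exact IsClosed.inter
      (isClosed_iInter fun j => isClosed_le continuous_const ((continuous_apply j).comp continuous_fst))
      (isClosed_le continuous_snd continuous_const)
  have hdisj : Disjoint M P := by
    rw [Set.disjoint_left]
    rintro p ⟨x, hx, rfl⟩ ⟨h1, h2⟩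
    simp only [hF] at h1 h2
    have hxf : ∀ j, b j ≤ ∑ i, A j i * x i := fun j => by linarith [h1 j]
    have := hvle x hx hxf
    have h2' : (∑ i, c i * x i) ≤ v - ε := h2
    linarith
  obtain ⟨f, u₀, v₀, hMlt, huv, hPgt⟩ :=
    geometric_hahn_banach_compact_closed hMcv hMcp hPcv hPcl hdisj
  set α : Fin m → ℝ :=
    fun j => f (((fun j' => if j = j' then (1:ℝ) else 0) : Fin m → ℝ), 0) with hα
  set β : ℝ := f ((0 : Fin m → ℝ), 1) with hβ
  have hMlt' : ∀ x ∈ convexHull ℝ (S : Set (Fin n → ℝ)),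
      (∑ j, ((∑ i, A j i * x i) - b j) * α j) + (∑ i, c i * x i) * β < u₀ := by
    intro x hx
    have := hMlt (F x) ⟨x, hx, rfl⟩
    rwa [hF, clm_decomp] at this
  have hPgt' : ∀ z : Fin m → ℝ, ∀ r : ℝ, (∀ j, 0 ≤ z j) → r ≤ v - ε →
      v₀ < (∑ j, z j * α j) + r * β := by
    intro z r hz hr
    have := hPgt (z, r) ⟨hz, hr⟩
    rwa [clm_decomp] at this
  -- α ≥ 0
  have hαnn : ∀ j, 0 ≤ α j := by
    intro j
    by_contra hneg
    push_neg at hneg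
    set T : ℝ := (v₀ - (v - ε) * β) / α j with hT
    set t : ℝ := max T 0 + 1 with ht
    have htnn : 0 ≤ t := by
      have := le_max_right T 0
      simp only [ht]; linarith
    have htT : T < t := by
      have := le_max_left T 0
      simp only [ht]; linarith
    set z : Fin m → ℝ := fun j' => if j' = j then t else 0 with hz
    have hznn : ∀ j', 0 ≤ z j' := by
      intro j'
      simp only [hz]
      split
      · exact htnn
      · exact le_rfl
    have hzsum : ∑ j', z j' * α j' = t * α j := by
      simp only [hz]
      rw [Finset.sum_eq_single j]
      · simp
      · intro j' _ hj'; simp [hj']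
      · intro h; exact absurd (Finset.mem_univ j) h
    have h1 := hPgt' z (v - ε) hznn le_rfl
    rw [hzsum] at h1
    have hTα : T * α j = v₀ - (v - ε) * β := div_mul_cancel₀ _ (ne_of_lt hneg)
    have : t * α j < T * α j := mul_lt_mul_of_neg_right htT hneg
    linarith
  -- β < 0
  have hβneg : β < 0 := by
    have hβle : β ≤ 0 := by
      by_contra hpos
      push_neg at hpos
      set r : ℝ := min (v - ε) ((v₀ - 1) / β) with hr
      have h1 := hPgt' 0 r (fun j => le_rfl) (min_le_left _ _)
      simp only [Pi.zero_apply, zero_mul, Finset.sum_const_zero, zero_add] at h1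
      have h2 : r * β ≤ v₀ - 1 := by
        have : r ≤ (v₀ - 1) / β := min_le_right _ _
        calc r * β ≤ ((v₀ - 1) / β) * β := mul_le_mul_of_nonneg_right this (le_of_lt hpos)
          _ = v₀ - 1 := div_mul_cancel₀ _ (ne_of_gt hpos)
      linarith
    rcases lt_or_eq_of_le hβle with h | h
    · exact h
    · exfalso
      set g : Fin m → ℝ := fun j => (∑ i, A j i * x₀ i) - b j with hg
      have hgnn : ∀ j, 0 ≤ g j := fun j => by simp only [hg]; linarith [hx₀f j]
      have h1 := hMlt' x₀ hx₀h
      have h2 := hPgt' g (v - ε) hgnn le_rfl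
      rw [h, mul_zero, add_zero] at h1
      rw [h, mul_zero, add_zero] at h2
      have hcomm : ∑ j, g j * α j = ∑ j, ((∑ i, A j i * x₀ i) - b j) * α j := rfl
      rw [hcomm] at h2
      linarith
  -- the good multiplier
  set lamb : Fin m → ℝ := fun j => α j / (-β) with hlamb
  have hlambnn : ∀ j, 0 ≤ lamb j := fun j => div_nonneg (hαnn j) (by linarith)
  have hv0 : v₀ < (v - ε) * β := by
    have := hPgt' 0 (v - ε) (fun j => le_rfl) le_rfl
    simpa using this
  have hkey : ∀ s : S, v - ε ≤ (∑ i, c i * (s : Fin n → ℝ) i)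
      - ∑ j, lamb j * ((∑ i, A j i * (s : Fin n → ℝ) i) - b j) := by
    rintro ⟨s, hs⟩
    have hsh : s ∈ convexHull ℝ (S : Set (Fin n → ℝ)) := subset_convexHull ℝ _ hs
    have h1 := hMlt' s hsh
    set G : ℝ := ∑ j, ((∑ i, A j i * s i) - b j) * α j with hG
    set Cs : ℝ := ∑ i, c i * s i with hCs
    have hsum : ∑ j, lamb j * ((∑ i, A j i * s i) - b j) = G / (-β) := by
      rw [hG, Finset.sum_div]
      refine Finset.sum_congr rfl fun j _ => ?_
      simp only [hlamb]
      ring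
    rw [hsum]
    have hβne : (-β) ≠ 0 := by linarith
    have hGD : (G / (-β)) * (-β) = G := div_mul_cancel₀ _ hβne
    nlinarith [h1, huv, hv0, hGD]
  have hstep : v - ε ≤ ⨅ x : S, ((∑ i, c i * (x : Fin n → ℝ) i)
      - ∑ j, lamb j * ((∑ i, A j i * (x : Fin n → ℝ) i) - b j)) :=
    le_ciInf hkey
  exact le_trans hstep (le_ciSup hbddA ⟨lamb, hlambnn⟩)
end

section
/- Consider the linear program over variables ν = (ν₀₀, ν₀₁, ν₁₀, ν₁₁) ∈ ℝ⁴: minimize 10(ν₀₁ + ν₁₀ + ν₁₁) subject to ν ≥ 0, ν₀₀ + ν₀₁ + ν₁₀ + ν₁₁ = 1, and (ν₀₀ + ν₀₁) + (ν₀₀ + ν₁₀) ≤ 1. Then (a) the optimal value is 5, attained at the fractional point ν₀₀ = ν₁₁ = 1/2, ν₀₁ = ν₁₀ = 0; and (b) every feasible point with all coordinates in {0,1} has objective value at least 10. Hence the Lagrangian/LP relaxation of the second-best MAP problem with Hamming (dot-product) dissimilarity is not tight. -/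
/-- The LP `min 10(ν₀₁+ν₁₀+ν₁₁)` s.t. `ν ≥ 0`, `Σν = 1`,
`(ν₀₀+ν₀₁) + (ν₀₀+ν₁₀) ≤ 1` has optimal value 5, attained at the fractional
point `ν₀₀ = ν₁₁ = 1/2`, while every feasible 0-1 point has objective ≥ 10:
the Lagrangian/LP relaxation of second-best MAP with Hamming dissimilarity
is not tight. -/
theorem second_best_lp_not_tight
    (feasible : ℝ → ℝ → ℝ → ℝ → Prop)
    (hfeas : feasible = fun v00 v01 v10 v11 =>
      0 ≤ v00 ∧ 0 ≤ v01 ∧ 0 ≤ v10 ∧ 0 ≤ v11 ∧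
      v00 + v01 + v10 + v11 = 1 ∧ (v00 + v01) + (v00 + v10) ≤ 1)
    (obj : ℝ → ℝ → ℝ → ℝ → ℝ)
    (hobj : obj = fun _ v01 v10 v11 => 10 * (v01 + v10 + v11)) :
    (IsLeast {y : ℝ | ∃ v00 v01 v10 v11,
        feasible v00 v01 v10 v11 ∧ y = obj v00 v01 v10 v11} 5 ∧
      feasible (1/2) 0 0 (1/2) ∧ obj (1/2) 0 0 (1/2) = 5) ∧
    (∀ v00 v01 v10 v11, feasible v00 v01 v10 v11 →
      (v00 = 0 ∨ v00 = 1) → (v01 = 0 ∨ v01 = 1) →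
      (v10 = 0 ∨ v10 = 1) → (v11 = 0 ∨ v11 = 1) →
      10 ≤ obj v00 v01 v10 v11) := by
  subst hfeas hobj
  refine ⟨⟨⟨⟨1/2, 0, 0, 1/2, ⟨by norm_num, by norm_num, by norm_num, by norm_num, by norm_num, by norm_num⟩, by norm_num⟩, ?_⟩, ⟨by norm_num, by norm_num, by norm_num, by norm_num, by norm_num, by norm_num⟩, by norm_num⟩, ?_⟩
  · rintro y ⟨a, b, c, d, ⟨ha, hb, hc, hd, hs, hl⟩, rfl⟩
    simp only []
    nlinarith
  · rintro a b c d ⟨ha, hb, hc, hd, hs, hl⟩ h0 h1 h2 h3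
    simp only []
    rcases h0 with rfl|rfl <;> rcases h1 with rfl|rfl <;> rcases h2 with rfl|rfl <;>
      rcases h3 with rfl|rfl <;> (revert hs hl; norm_num)
end
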